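/- arXiv:2002.07562 — 2 statements merged into one kernel-verified Lean document; each statement's English description precedes it below -/
import Mathlib

section
/- For every regular expression r and every word w = a₁…aₙ ∈ Σ*, w ∈ L(r) if and only if there exist regular expressions r₀ = r, r₁, …, rₙ with rᵢ₋₁ —aᵢ→ rᵢ for each 1 ≤ i ≤ n and rₙ√. -/
open RegularExpression

/-- The acceptance predicate √ on regular expressions. -/
inductive Surd {α : Type} : RegularExpression α → Prop
  | eps : Surd 1
  | star (r : RegularExpression α) : Surd (RegularExpression.star r)
  | plusL {r₁ r₂ : RegularExpression α} : Surd r₁ → Surd (r₁ + r₂)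
  | plusR {r₁ r₂ : RegularExpression α} : Surd r₂ → Surd (r₁ + r₂)
  | comp {r₁ r₂ : RegularExpression α} : Surd r₁ → Surd r₂ → Surd (r₁ * r₂)

/-- The SOS transition relation r —a→ r'. -/
inductive Deriv {α : Type} : RegularExpression α → α → RegularExpression α → Prop
  | char (a : α) : Deriv (RegularExpression.char a) a 1
  | plusL {r₁ r₂ r₁' : RegularExpression α} {a : α} :
      Deriv r₁ a r₁' → Deriv (r₁ + r₂) a r₁'
  | plusR {r₁ r₂ r₂' : RegularExpression α} {a : α} :
      Deriv r₂ a r₂' → Deriv (r₁ + r₂) a r₂'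
  | compL {r₁ r₂ r₁' : RegularExpression α} {a : α} :
      Deriv r₁ a r₁' → Deriv (r₁ * r₂) a (r₁' * r₂)
  | compR {r₁ r₂ r₂' : RegularExpression α} {a : α} :
      Surd r₁ → Deriv r₂ a r₂' → Deriv (r₁ * r₂) a r₂'
  | star {r r'' : RegularExpression α} {a : α} :
      Deriv r a r'' → Deriv (RegularExpression.star r) a (r'' * RegularExpression.star r)

/-- Multi-step transitions labelled by a word. -/
inductive Derivs {α : Type} : RegularExpression α → List α → RegularExpression α → Prop
  | nil (r : RegularExpression α) : Derivs r [] r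
  | cons {r r' r'' : RegularExpression α} {a : α} {w : List α} :
      Deriv r a r' → Derivs r' w r'' → Derivs r (a :: w) r''

/-- The reachability set RS(r). -/
def RS {α : Type} (r : RegularExpression α) : Set (RegularExpression α) :=
  {r' | Relation.ReflTransGen (fun s t => ∃ a, Deriv s a t) r r'}

/-- Syntactic size of a regular expression. -/
def rsize {α : Type} : RegularExpression α → ℕ
  | RegularExpression.zero => 1
  | RegularExpression.epsilon => 1
  | RegularExpression.char _ => 1
  | RegularExpression.plus r₁ r₂ => rsize r₁ + rsize r₂ + 1
  | RegularExpression.comp r₁ r₂ => rsize r₁ + rsize r₂ + 1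
  | RegularExpression.star r => rsize r + 1

lemma surd_nil {α : Type} {r : RegularExpression α} (h : Surd r) : [] ∈ r.matches' := by
  induction h with
  | eps => simp [matches'_epsilon]
  | star r => rw [matches'_star]; exact Language.nil_mem_kstar _
  | plusL _ ih => rw [matches'_add]; exact Or.inl ih
  | plusR _ ih => rw [matches'_add]; exact Or.inr ih
  | comp _ _ ih₁ ih₂ =>
      rw [matches'_mul]
      exact Language.append_mem_mul ih₁ ih₂

lemma deriv_sound {α : Type} {r r' : RegularExpression α} {a : α} (h : Deriv r a r') :
    ∀ w, w ∈ r'.matches' → a :: w ∈ r.matches' := by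
  induction h with
  | char b =>
      intro w hw
      rw [matches'_epsilon, Language.mem_one] at hw
      subst hw
      rw [matches'_char]
      rfl
  | @plusL r₁ r₂ r₁' b _ ih => intro w hw; rw [matches'_add]; exact Or.inl (ih w hw)
  | @plusR r₁ r₂ r₂' b _ ih => intro w hw; rw [matches'_add]; exact Or.inr (ih w hw)
  | @compL r₁ r₂ r₁' b _ ih =>
      intro w hw
      rw [matches'_mul, Language.mem_mul] at hw ⊢
      obtain ⟨u, hu, v, hv, huv⟩ := hw
      exact ⟨b :: u, ih u hu, v, hv, by simp [huv]⟩
  | @compR r₁ r₂ r₂' b hs _ ih =>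
      intro w hw
      rw [matches'_mul, Language.mem_mul]
      exact ⟨[], surd_nil hs, b :: w, ih w hw, rfl⟩
  | @star rr r'' b _ ih =>
      intro w hw
      rw [matches'_mul, Language.mem_mul] at hw
      obtain ⟨u, hu, v, hv, huv⟩ := hw
      rw [matches'_star] at hv ⊢
      rw [Language.mem_kstar] at hv ⊢
      obtain ⟨L, hL, hmem⟩ := hv
      refine ⟨(b :: u) :: L, by simp [← hL, huv], ?_⟩
      intro y hy
      rcases List.mem_cons.mp hy with h | h
      · subst h; exact ih u hu
      · exact hmem y h

lemma derivs_trans {α : Type} {r r' r'' : RegularExpression α} {w₁ w₂ : List α}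
    (h₁ : Derivs r w₁ r') (h₂ : Derivs r' w₂ r'') : Derivs r (w₁ ++ w₂) r'' := by
  induction h₁ with
  | nil => exact h₂
  | cons hd _ ih => exact Derivs.cons hd (ih h₂)

lemma derivs_compL {α : Type} {r₁ r₁' r₂ : RegularExpression α} {w : List α}
    (h : Derivs r₁ w r₁') : Derivs (r₁ * r₂) w (r₁' * r₂) := by
  induction h with
  | nil => exact Derivs.nil _
  | cons hd _ ih => exact Derivs.cons (Deriv.compL hd) ih

lemma derivs_comp_cont {α : Type} {s₁ r₂ : RegularExpression α} {v : List α}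
    (hs : Surd s₁) (h : ∃ r', Derivs r₂ v r' ∧ Surd r') :
    ∃ r'', Derivs (s₁ * r₂) v r'' ∧ Surd r'' := by
  obtain ⟨r', hd, hsr⟩ := h
  cases hd with
  | nil => exact ⟨s₁ * r₂, Derivs.nil _, Surd.comp hs hsr⟩
  | cons hstep hrest =>
      exact ⟨r', Derivs.cons (Deriv.compR hs hstep) hrest, hsr⟩

lemma matches_to_derivs {α : Type} (r : RegularExpression α) :
    ∀ w, w ∈ r.matches' → ∃ r', Derivs r w r' ∧ Surd r' := by
  induction r with
  | zero =>
      intro w hw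
      exact absurd hw (by rw [show (RegularExpression.zero : RegularExpression α) = 0 from rfl, matches'_zero]; exact fun h => h)
  | epsilon =>
      intro w hw
      rw [show (RegularExpression.epsilon : RegularExpression α) = 1 from rfl,
        matches'_epsilon, Language.mem_one] at hw
      subst hw; exact ⟨1, Derivs.nil _, Surd.eps⟩
  | char a =>
      intro w hw
      rw [matches'_char] at hw
      replace hw : w = [a] := hw
      subst hw
      exact ⟨1, Derivs.cons (Deriv.char a) (Derivs.nil _), Surd.eps⟩
  | plus r₁ r₂ ih₁ ih₂ =>
      intro w hw
      rw [show r₁.plus r₂ = r₁ + r₂ from rfl, matches'_add] at hw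
      rcases hw with hw | hw
      · obtain ⟨r', hd, hs⟩ := ih₁ w hw
        cases hd with
        | nil => exact ⟨r₁ + r₂, Derivs.nil _, Surd.plusL hs⟩
        | cons hstep hrest => exact ⟨r', Derivs.cons (Deriv.plusL hstep) hrest, hs⟩
      · obtain ⟨r', hd, hs⟩ := ih₂ w hw
        cases hd with
        | nil => exact ⟨r₁ + r₂, Derivs.nil _, Surd.plusR hs⟩
        | cons hstep hrest => exact ⟨r', Derivs.cons (Deriv.plusR hstep) hrest, hs⟩
  | comp r₁ r₂ ih₁ ih₂ =>
      intro w hw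
      rw [show r₁.comp r₂ = r₁ * r₂ from rfl, matches'_mul, Language.mem_mul] at hw
      obtain ⟨u, hu, v, hv, huv⟩ := hw
      obtain ⟨s₁, hd₁, hs₁⟩ := ih₁ u hu
      obtain ⟨r'', hd₂, hs₂⟩ := derivs_comp_cont hs₁ (ih₂ v hv)
      exact ⟨r'', huv ▸ derivs_trans (derivs_compL hd₁) hd₂, hs₂⟩
  | star r ih =>
      intro w hw
      rw [matches'_star, Language.mem_kstar] at hw
      obtain ⟨L, hL, hmem⟩ := hw
      subst hL
      revert hmem
      induction L with
      | nil => exact fun _ => ⟨RegularExpression.star r, Derivs.nil _, Surd.star r⟩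
      | cons u L' ihL =>
          intro hmem
          have hv := ihL (fun y hy => hmem y (List.mem_cons_of_mem _ hy))
          have hu : u ∈ r.matches' := hmem u List.mem_cons_self
          simp only [List.flatten_cons]
          cases u with
          | nil => simpa using hv
          | cons a u' =>
              obtain ⟨s, hd, hs⟩ := ih (a :: u') hu
              cases hd with
              | cons hstep hrest =>
                  obtain ⟨r'', hd₂, hs₂⟩ := derivs_comp_cont hs hv
                  refine ⟨r'', ?_, hs₂⟩
                  rw [List.cons_append]
                  exact Derivs.cons (Deriv.star hstep)
                    (derivs_trans (derivs_compL hrest) hd₂)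

theorem mem_iff_derivs_surd {α : Type} (r : RegularExpression α) (w : List α) :
    w ∈ r.matches' ↔ ∃ r', Derivs r w r' ∧ Surd r' := by
  constructor
  · exact matches_to_derivs r w
  · rintro ⟨r', hd, hs⟩
    induction hd with
    | nil => exact surd_nil hs
    | cons hstep _ ih => exact deriv_sound hstep _ (ih hs)
end

section
/- For every regular expression r and symbol a ∈ Σ, the Brzozowski derivative of L(r) with respect to a equals the union over all SOS transitions r —a→ r' of L(r'): { w : a·w ∈ L(r) } = ⋃ { L(r') : r —a→ r' }. -/
open RegularExpression

section Aux
open RegularExpression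

lemma surd_iff {α : Type} (r : RegularExpression α) : Surd r ↔ [] ∈ r.matches' := by
  induction r with
  | zero =>
    constructor
    · intro h; cases h
    · intro h; simp [matches'_zero] at h
  | epsilon =>
    constructor
    · intro _; simp [matches'_epsilon]
    · intro _; exact Surd.eps
  | char b =>
    constructor
    · intro h; cases h
    · intro h; exact absurd (Set.mem_singleton_iff.mp h) (by simp)
  | plus r₁ r₂ ih₁ ih₂ =>
    constructor
    · intro h
      cases h with
      | plusL h => exact Or.inl (ih₁.mp h)
      | plusR h => exact Or.inr (ih₂.mp h)
    · intro h
      rcases h with h | h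
      · exact Surd.plusL (ih₁.mpr h)
      · exact Surd.plusR (ih₂.mpr h)
  | comp r₁ r₂ ih₁ ih₂ =>
    constructor
    · intro h
      cases h with
      | comp h1 h2 =>
        rw [show (r₁.comp r₂) = r₁ * r₂ from rfl, matches'_mul]
        exact ⟨[], ih₁.mp h1, [], ih₂.mp h2, rfl⟩
    · intro h
      rw [show (r₁.comp r₂) = r₁ * r₂ from rfl, matches'_mul] at h
      rcases h with ⟨u, hu, v, hv, huv⟩
      rcases List.append_eq_nil_iff.mp huv with ⟨rfl, rfl⟩
      exact Surd.comp (ih₁.mpr hu) (ih₂.mpr hv)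
  | star r ih =>
    constructor
    · intro _; rw [matches'_star]; exact Language.nil_mem_kstar _
    · intro _; exact Surd.star r

lemma deriv_iff {α : Type} (r : RegularExpression α) (a : α) (w : List α) :
    (a :: w) ∈ r.matches' ↔ ∃ r', Deriv r a r' ∧ w ∈ r'.matches' := by
  induction r generalizing w with
  | zero =>
    constructor
    · intro h; exact h.elim
    · rintro ⟨r', hd, _⟩; cases hd
  | epsilon =>
    constructor
    · intro h
      rw [show (RegularExpression.epsilon : RegularExpression α) = 1 from rfl,
        matches'_epsilon, Language.mem_one] at h
      exact absurd h (by simp)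
    · rintro ⟨r', hd, _⟩; cases hd
  | char b =>
    constructor
    · intro h
      simp only [matches'_char] at h
      rw [show (a :: w ∈ ({[b]} : Language α)) ↔ a :: w = [b] from Iff.rfl, List.cons.injEq] at h
      obtain ⟨rfl, rfl⟩ := h
      exact ⟨1, Deriv.char a, by simp [matches'_epsilon]⟩
    · rintro ⟨r', hd, hw⟩
      cases hd
      simp only [matches'_epsilon, Language.mem_one] at hw
      subst hw
      simp only [matches'_char]
      exact rfl
  | plus r₁ r₂ ih₁ ih₂ =>
    constructor
    · intro h
      rcases h with h | h
      · rcases (ih₁ w).mp h with ⟨r', hd, hw⟩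
        exact ⟨r', Deriv.plusL hd, hw⟩
      · rcases (ih₂ w).mp h with ⟨r', hd, hw⟩
        exact ⟨r', Deriv.plusR hd, hw⟩
    · rintro ⟨r', hd, hw⟩
      cases hd with
      | plusL hd => exact Or.inl ((ih₁ w).mpr ⟨_, hd, hw⟩)
      | plusR hd => exact Or.inr ((ih₂ w).mpr ⟨_, hd, hw⟩)
  | comp r₁ r₂ ih₁ ih₂ =>
    rw [show (r₁.comp r₂) = r₁ * r₂ from rfl, matches'_mul]
    constructor
    · intro h
      rcases h with ⟨u, hu, v, hv, huv⟩
      cases u with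
      | nil =>
        simp only [List.nil_append] at huv
        subst huv
        rcases (ih₂ w).mp hv with ⟨r', hd, hw⟩
        exact ⟨r', Deriv.compR ((surd_iff r₁).mpr hu) hd, hw⟩
      | cons b u =>
        obtain ⟨rfl, rfl⟩ : b = a ∧ u ++ v = w := by
          injection huv with h1 h2; exact ⟨h1, h2⟩
        rcases (ih₁ u).mp hu with ⟨r', hd, hu'⟩
        exact ⟨r' * r₂, Deriv.compL hd, by rw [matches'_mul]; exact ⟨u, hu', v, hv, rfl⟩⟩
    · rintro ⟨r', hd, hw⟩
      cases hd with
      | compL hd =>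
        rw [matches'_mul] at hw
        rcases hw with ⟨u, hu, v, hv, rfl⟩
        exact ⟨a :: u, (ih₁ u).mpr ⟨_, hd, hu⟩, v, hv, rfl⟩
      | compR hs hd =>
        exact ⟨[], (surd_iff r₁).mp hs, a :: w, (ih₂ w).mpr ⟨_, hd, hw⟩, rfl⟩
  | star r ih =>
    rw [matches'_star]
    constructor
    · intro h
      rw [Language.mem_kstar_iff_exists_nonempty] at h
      rcases h with ⟨S, hjoin, hS⟩
      cases S with
      | nil => simp at hjoin
      | cons s S =>
        have hs := hS s List.mem_cons_self
        cases s with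
        | nil => exact absurd rfl hs.2
        | cons b u =>
          obtain ⟨rfl, rfl⟩ : b = a ∧ u ++ S.flatten = w := by
            simp only [List.flatten, List.cons_append] at hjoin
            injection hjoin with h1 h2; exact ⟨h1.symm, h2.symm⟩
          rcases (ih u).mp hs.1 with ⟨r', hd, hu⟩
          refine ⟨r' * r.star, Deriv.star hd, ?_⟩
          rw [matches'_mul, matches'_star]
          refine ⟨u, hu, S.flatten, ?_, rfl⟩
          apply Language.mem_kstar_iff_exists_nonempty.mpr
          exact ⟨S, rfl, fun y hy => hS y (List.mem_cons_of_mem _ hy)⟩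
    · rintro ⟨r', hd, hw⟩
      cases hd with
      | star hd =>
        rw [matches'_mul, matches'_star] at hw
        rcases hw with ⟨u, hu, v, hv, rfl⟩
        have h1 : (a :: u) ∈ r.matches' := (ih u).mpr ⟨_, hd, hu⟩
        replace hv := Language.mem_kstar.mp hv; apply Language.mem_kstar.mpr
        rcases hv with ⟨S, rfl, hS⟩
        refine ⟨(a :: u) :: S, by simp, fun y hy => ?_⟩
        rcases List.mem_cons.mp hy with rfl | hy
        · exact h1
        · exact hS y hy

end Aux


theorem derivative_eq_union_targets {α : Type} (r : RegularExpression α) (a : α) :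
    {w : List α | (a :: w) ∈ r.matches'} =
      ⋃ r' ∈ {r' | Deriv r a r'}, (r'.matches' : Set (List α)) := by
  ext w
  simp only [Set.mem_setOf_eq, Set.mem_iUnion, exists_prop]
  exact (deriv_iff r a w).trans (exists_congr fun r' => ⟨fun ⟨h1, h2⟩ => Set.mem_iUnion.mpr ⟨h1, h2⟩,
    fun h => by obtain ⟨h1, h2⟩ := Set.mem_iUnion.mp h; exact ⟨h1, h2⟩⟩)
end
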